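/- Let H ∈ ℝ^{M×d}, W ∈ ℝ^{p×d} with ‖W‖₂ = 1 and ker(H) ∩ ker(W) = {0}, λ > 0, ε > 0, and let M: ℝ^d → ℝ^{p×p} map into diagonal matrices with ε·Id ⪯ M(x)² ⪯ Id, with x ↦ M(x)² Lipschitz with constant L (spectral norm on matrices). Define λ_ε = λ_min(HᵀH + λε WᵀW) and T(x) = (HᵀH + λ W ᵀM(x)²W)⁻¹Hᵀy. Then for all x₁, x₂: ‖T(x₁) − T(x₂)‖₂ ≤ (λ L ‖Hᵀy‖₂ / λ_ε²)·‖x₁ − x₂‖₂. -/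

import Mathlib

open Matrix
open scoped RealInnerProductSpace
noncomputable def e {n : ℕ} (v : Fin n → ℝ) : EuclideanSpace ℝ (Fin n) := WithLp.toLp 2 v

noncomputable def specNorm {m n : ℕ} (A : Matrix (Fin m) (Fin n) ℝ) : ℝ :=
  ‖LinearMap.toContinuousLinearMap (Matrix.toEuclideanLin A)‖

lemma e_sub {n : ℕ} (u v : Fin n → ℝ) : e u - e v = e (u - v) := by simp [e]

lemma inner_e {n : ℕ} (u v : Fin n → ℝ) : ⟪e u, e v⟫ = u ⬝ᵥ v := by
  simp [e, PiLp.inner_apply, dotProduct, RCLike.inner_apply, mul_comm]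

lemma norm_e_sq {n : ℕ} (v : Fin n → ℝ) : ‖e v‖ ^ 2 = v ⬝ᵥ v := by
  rw [← inner_e, real_inner_self_eq_norm_sq]

lemma mulVec_norm_le {m n : ℕ} (A : Matrix (Fin m) (Fin n) ℝ) (v : Fin n → ℝ) :
    ‖e (A *ᵥ v)‖ ≤ specNorm A * ‖e v‖ := by
  have h : e (A *ᵥ v) = (LinearMap.toContinuousLinearMap (Matrix.toEuclideanLin A)) (e v) := rfl
  rw [h]
  exact ContinuousLinearMap.le_opNorm _ _

lemma dot_T {m n : ℕ} (A : Matrix (Fin m) (Fin n) ℝ) (v : Fin n → ℝ) (w : Fin m → ℝ) :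
    v ⬝ᵥ (Aᵀ *ᵥ w) = (A *ᵥ v) ⬝ᵥ w := by
  rw [dotProduct_mulVec, vecMul_transpose]

lemma rayleigh_lower {n : ℕ} {A : Matrix (Fin n) (Fin n) ℝ} (hA : A.IsHermitian) (c : ℝ)
    (hc : ∀ i, c ≤ hA.eigenvalues i) (v : Fin n → ℝ) :
    c * (v ⬝ᵥ v) ≤ v ⬝ᵥ (A *ᵥ v) := by
  set U : Matrix (Fin n) (Fin n) ℝ := hA.eigenvectorUnitary.val with hU
  set f := hA.eigenvalues with hf
  set w := Uᵀ *ᵥ v with hw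
  have hstar : star U = Uᵀ := by
    rw [Matrix.star_eq_conjTranspose]
    ext i j
    simp [Matrix.conjTranspose_apply]
  have hUUT : U * Uᵀ = 1 := by
    have h2 := (Matrix.mem_unitaryGroup_iff).mp hA.eigenvectorUnitary.2
    rwa [hstar] at h2
  have hdual : ∀ z : Fin n → ℝ, v ⬝ᵥ (U *ᵥ z) = w ⬝ᵥ z := by
    intro z
    have := dot_T Uᵀ v z
    rwa [Matrix.transpose_transpose] at this
  have hvv : v ⬝ᵥ v = w ⬝ᵥ w := by
    rw [show w ⬝ᵥ w = v ⬝ᵥ (U *ᵥ w) from (hdual w).symm, hw,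
      Matrix.mulVec_mulVec, hUUT, Matrix.one_mulVec]
  have hquad : v ⬝ᵥ (A *ᵥ v) = w ⬝ᵥ (Matrix.diagonal f *ᵥ w) := by
    conv_lhs => rw [hA.spectral_theorem, Unitary.conjStarAlgAut_apply]
    rw [hstar]
    have : (U * Matrix.diagonal (RCLike.ofReal ∘ f) * Uᵀ) *ᵥ v
        = U *ᵥ (Matrix.diagonal (RCLike.ofReal ∘ f) *ᵥ (Uᵀ *ᵥ v)) := by
      rw [Matrix.mulVec_mulVec, Matrix.mulVec_mulVec]
    rw [this, hdual]
    congr 1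
  calc c * (v ⬝ᵥ v) = ∑ i, c * (w i * w i) := by
        rw [hvv]; rw [dotProduct]; rw [Finset.mul_sum]
    _ ≤ ∑ i, f i * (w i * w i) := by
        apply Finset.sum_le_sum
        intro i _
        exact mul_le_mul_of_nonneg_right (hc i) (mul_self_nonneg _)
    _ = w ⬝ᵥ (Matrix.diagonal f *ᵥ w) := by
        simp only [dotProduct, Matrix.mulVec_diagonal]; apply Finset.sum_congr rfl; intros; ring
    _ = v ⬝ᵥ (A *ᵥ v) := hquad.symm

lemma dot_self_pos {k : ℕ} {w : Fin k → ℝ} (h : w ≠ 0) : 0 < w ⬝ᵥ w :=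
  lt_of_le_of_ne (Finset.sum_nonneg fun i _ => mul_self_nonneg _)
    (fun h0 => h (dotProduct_self_eq_zero.mp h0.symm))

theorem stmt_12 {M d p : ℕ} [NeZero d] (H : Matrix (Fin M) (Fin d) ℝ)
    (W : Matrix (Fin p) (Fin d) ℝ) (hW : specNorm W = 1)
    (hker : ∀ x : Fin d → ℝ, H *ᵥ x = 0 → W *ᵥ x = 0 → x = 0)
    (lam ε L : ℝ) (hlam : 0 < lam) (hε : 0 < ε) (hL : 0 ≤ L)
    (m : (Fin d → ℝ) → (Fin p → ℝ))
    (hm : ∀ x i, ε ≤ (m x i) ^ 2 ∧ (m x i) ^ 2 ≤ 1)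
    (hmlip : ∀ x₁ x₂ : Fin d → ℝ,
      specNorm ((diagonal (m x₁)) ^ 2 - (diagonal (m x₂)) ^ 2) ≤ L * ‖e x₁ - e x₂‖)
    (hsym : (Hᵀ * H + (lam * ε) • (Wᵀ * W)).IsHermitian)
    (lamε : ℝ) (hlamε : lamε = ⨅ i, hsym.eigenvalues i)
    (y : Fin M → ℝ)
    (T : (Fin d → ℝ) → (Fin d → ℝ))
    (hT : ∀ x, T x = (Hᵀ * H + lam • (Wᵀ * (diagonal (m x)) ^ 2 * W))⁻¹ *ᵥ (Hᵀ *ᵥ y)) :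
    ∀ x₁ x₂ : Fin d → ℝ,
      ‖e (T x₁) - e (T x₂)‖ ≤ (lam * L * ‖e (Hᵀ *ᵥ y)‖ / lamε ^ 2) * ‖e x₁ - e x₂‖ := by
  intro x₁ x₂
  haveI : Nonempty (Fin d) := Fin.pos_iff_nonempty.mp (Nat.pos_of_ne_zero (NeZero.ne d))
  let A : (Fin d → ℝ) → Matrix (Fin d) (Fin d) ℝ :=
    fun x => Hᵀ * H + lam • (Wᵀ * (diagonal (m x)) ^ 2 * W)
  have hAdef : ∀ x, A x = Hᵀ * H + lam • (Wᵀ * (diagonal (m x)) ^ 2 * W) := fun _ => rfl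
  have hTA' : ∀ x, T x = (A x)⁻¹ *ᵥ (Hᵀ *ᵥ y) := hT
  set B := Hᵀ * H + (lam * ε) • (Wᵀ * W) with hB
  obtain ⟨u, hu⟩ : ∃ u, Hᵀ *ᵥ y = u := ⟨_, rfl⟩
  rw [hu]
  have hTA : ∀ x, T x = (A x)⁻¹ *ᵥ u := by intro x; rw [hTA', hu]
  have hDsq : ∀ x, (diagonal (m x)) ^ 2 = diagonal (fun i => m x i ^ 2) := by
    intro x
    rw [sq, diagonal_mul_diagonal]
    have : (fun i => m x i * m x i) = fun i => m x i ^ 2 := funext fun i => (pow_two _).symm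
    rw [this]
  have hqHH : ∀ v : Fin d → ℝ, v ⬝ᵥ ((Hᵀ * H) *ᵥ v) = (H *ᵥ v) ⬝ᵥ (H *ᵥ v) := by
    intro v; rw [← Matrix.mulVec_mulVec, dot_T]
  have hqW : ∀ (g : Fin p → ℝ) (v : Fin d → ℝ),
      v ⬝ᵥ ((Wᵀ * diagonal g * W) *ᵥ v) = ∑ i, g i * ((W *ᵥ v) i) ^ 2 := by
    intro g v
    rw [← Matrix.mulVec_mulVec, ← Matrix.mulVec_mulVec, dot_T]
    simp only [dotProduct, Matrix.mulVec_diagonal]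
    exact Finset.sum_congr rfl fun i _ => by ring
  have hqWW : ∀ v : Fin d → ℝ, v ⬝ᵥ ((Wᵀ * W) *ᵥ v) = ∑ i, ((W *ᵥ v) i) ^ 2 := by
    intro v
    rw [← Matrix.mulVec_mulVec, dot_T]
    simp only [dotProduct]
    exact Finset.sum_congr rfl fun i _ => by ring
  have quadA : ∀ x (v : Fin d → ℝ), v ⬝ᵥ (A x *ᵥ v)
      = (H *ᵥ v) ⬝ᵥ (H *ᵥ v) + lam * ∑ i, (m x i) ^ 2 * ((W *ᵥ v) i) ^ 2 := by
    intro x v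
    rw [hAdef, Matrix.add_mulVec, dotProduct_add, hqHH, Matrix.smul_mulVec,
      dotProduct_smul, smul_eq_mul, hDsq, hqW]
  have quadB : ∀ v : Fin d → ℝ, v ⬝ᵥ (B *ᵥ v)
      = (H *ᵥ v) ⬝ᵥ (H *ᵥ v) + (lam * ε) * ∑ i, ((W *ᵥ v) i) ^ 2 := by
    intro v
    rw [hB, Matrix.add_mulVec, dotProduct_add, hqHH, Matrix.smul_mulVec,
      dotProduct_smul, smul_eq_mul, hqWW]
  have hBle : ∀ x (v : Fin d → ℝ), v ⬝ᵥ (B *ᵥ v) ≤ v ⬝ᵥ (A x *ᵥ v) := by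
    intro x v
    rw [quadA, quadB]
    apply add_le_add_right
    have h1 : (lam * ε) * ∑ i, ((W *ᵥ v) i) ^ 2 = lam * ∑ i, ε * ((W *ᵥ v) i) ^ 2 := by
      rw [Finset.mul_sum, Finset.mul_sum]; exact Finset.sum_congr rfl fun i _ => by ring
    rw [h1]
    apply mul_le_mul_of_nonneg_left _ hlam.le
    exact Finset.sum_le_sum fun i _ => mul_le_mul_of_nonneg_right (hm x i).1 (sq_nonneg _)
  have hBpd : B.PosDef := by
    refine Matrix.PosDef.of_dotProduct_mulVec_pos hsym fun v hv => ?_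
    have hsv : star v = v := by funext i; simp
    rw [hsv, quadB]
    have h2 : 0 ≤ ∑ i, ((W *ᵥ v) i) ^ 2 := Finset.sum_nonneg fun i _ => sq_nonneg _
    rcases eq_or_ne (H *ᵥ v) 0 with h | h
    · have hWv : 0 < (W *ᵥ v) ⬝ᵥ (W *ᵥ v) :=
        dot_self_pos (fun h0 => hv (hker v h h0))
      have hWv2 : 0 < ∑ i, ((W *ᵥ v) i) ^ 2 := by
        have : (W *ᵥ v) ⬝ᵥ (W *ᵥ v) = ∑ i, ((W *ᵥ v) i) ^ 2 := by
          simp only [dotProduct]; exact Finset.sum_congr rfl fun i _ => by ring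
        linarith [this ▸ hWv]
      have : (H *ᵥ v) ⬝ᵥ (H *ᵥ v) = 0 := by rw [h]; simp
      rw [this]
      have := mul_pos (mul_pos hlam hε) hWv2
      linarith
    · have h1 : 0 < (H *ᵥ v) ⬝ᵥ (H *ᵥ v) := dot_self_pos h
      have := mul_nonneg (mul_pos hlam hε).le h2
      linarith
  have hc : ∀ i, lamε ≤ hsym.eigenvalues i := fun i =>
    hlamε ▸ ciInf_le (Set.finite_range _).bddBelow i
  have hlamε_pos : 0 < lamε := by
    obtain ⟨i0, -, hmin⟩ := Finset.exists_min_image Finset.univ hsym.eigenvalues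
      ⟨Classical.arbitrary _, Finset.mem_univ _⟩
    have heq : lamε = hsym.eigenvalues i0 :=
      le_antisymm (hc i0) (hlamε ▸ le_ciInf fun j => hmin j (Finset.mem_univ j))
    rw [heq]
    exact hBpd.eigenvalues_pos i0
  have key : ∀ x (v : Fin d → ℝ), lamε * (v ⬝ᵥ v) ≤ v ⬝ᵥ (A x *ᵥ v) :=
    fun x v => (rayleigh_lower hsym lamε hc v).trans (hBle x v)
  have hconjH : Hᴴ = Hᵀ := by ext i j; simp [Matrix.conjTranspose_apply]
  have hconjW : Wᴴ = Wᵀ := by ext i j; simp [Matrix.conjTranspose_apply]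
  have hApd : ∀ x, (A x).PosDef := by
    intro x
    refine Matrix.PosDef.of_dotProduct_mulVec_pos ?_ ?_
    · rw [hAdef]
      have hH : (Hᵀ * H).IsHermitian := by
        have := Matrix.isHermitian_conjTranspose_mul_self H
        rwa [hconjH] at this
      have hWDW : (Wᵀ * (diagonal (m x)) ^ 2 * W).IsHermitian := by
        rw [hDsq]
        have := Matrix.isHermitian_conjTranspose_mul_mul W
          (Matrix.isHermitian_diagonal (fun i => m x i ^ 2))
        rwa [hconjW] at this
      have hsmul : (lam • (Wᵀ * (diagonal (m x)) ^ 2 * W)).IsHermitian := by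
        show (lam • (Wᵀ * (diagonal (m x)) ^ 2 * W))ᴴ = _
        rw [Matrix.conjTranspose_smul, hWDW.eq, star_trivial]
      exact hH.add hsmul
    · intro v hv
      have hsv : star v = v := by funext i; simp
      rw [hsv]
      calc (0:ℝ) < lamε * (v ⬝ᵥ v) := mul_pos hlamε_pos (dot_self_pos hv)
        _ ≤ _ := key x v
  have hdet : ∀ x, IsUnit (A x).det := fun x => (hApd x).det_pos.ne'.isUnit
  have hlow : ∀ x (v : Fin d → ℝ), lamε * ‖e v‖ ≤ ‖e (A x *ᵥ v)‖ := by
    intro x v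
    rcases eq_or_ne v 0 with rfl | hv
    · simp only [Matrix.mulVec_zero]
      have : (e (0 : Fin d → ℝ)) = 0 := by simp [e]
      rw [this]; simp
    · have h1 : lamε * ‖e v‖ ^ 2 ≤ ‖e v‖ * ‖e (A x *ᵥ v)‖ := by
        calc lamε * ‖e v‖ ^ 2 = lamε * (v ⬝ᵥ v) := by rw [norm_e_sq]
          _ ≤ v ⬝ᵥ (A x *ᵥ v) := key x v
          _ = ⟪e v, e (A x *ᵥ v)⟫ := (inner_e _ _).symm
          _ ≤ ‖e v‖ * ‖e (A x *ᵥ v)‖ := real_inner_le_norm _ _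
      have hnv : 0 < ‖e v‖ := norm_pos_iff.mpr fun h0 => hv (by simpa [e] using h0)
      nlinarith [h1, hnv]
  have hinv : ∀ x (w : Fin d → ℝ), ‖e ((A x)⁻¹ *ᵥ w)‖ ≤ ‖e w‖ / lamε := by
    intro x w
    have h := hlow x ((A x)⁻¹ *ᵥ w)
    rw [Matrix.mulVec_mulVec, Matrix.mul_nonsing_inv _ (hdet x), Matrix.one_mulVec] at h
    rw [le_div_iff₀ hlamε_pos]
    linarith
  set Dd := (diagonal (m x₂)) ^ 2 - (diagonal (m x₁)) ^ 2 with hDd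
  have hA21 : A x₂ - A x₁ = lam • (Wᵀ * Dd * W) := by
    rw [hAdef, hAdef, hDd]
    have h1 : Wᵀ * ((diagonal (m x₂)) ^ 2 - (diagonal (m x₁)) ^ 2) * W
        = Wᵀ * (diagonal (m x₂)) ^ 2 * W - Wᵀ * (diagonal (m x₁)) ^ 2 * W := by
      rw [Matrix.mul_sub, Matrix.sub_mul]
    rw [h1, smul_sub]
    abel
  have hDdnorm : specNorm Dd ≤ L * ‖e x₁ - e x₂‖ := by
    have h := hmlip x₂ x₁
    rwa [norm_sub_rev] at h
  have hsn : 0 ≤ specNorm Dd := norm_nonneg _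
  have hmid : ∀ z : Fin d → ℝ, ‖e ((Wᵀ * Dd * W) *ᵥ z)‖ ≤ specNorm Dd * ‖e z‖ := by
    intro z
    set q := (Wᵀ * Dd * W) *ᵥ z with hq
    have hqq : q ⬝ᵥ q ≤ ‖e q‖ * (specNorm Dd * ‖e z‖) := by
      have h1 : q ⬝ᵥ q = (W *ᵥ q) ⬝ᵥ (Dd *ᵥ (W *ᵥ z)) := by
        nth_rewrite 2 [hq]
        rw [← Matrix.mulVec_mulVec, ← Matrix.mulVec_mulVec, dot_T]
      calc q ⬝ᵥ q = ⟪e (W *ᵥ q), e (Dd *ᵥ (W *ᵥ z))⟫ := by rw [h1, inner_e]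
        _ ≤ ‖e (W *ᵥ q)‖ * ‖e (Dd *ᵥ (W *ᵥ z))‖ := real_inner_le_norm _ _
        _ ≤ (specNorm W * ‖e q‖) * (specNorm Dd * (specNorm W * ‖e z‖)) := by
            apply mul_le_mul (mulVec_norm_le _ _) _ (norm_nonneg _)
              (mul_nonneg (norm_nonneg _) (norm_nonneg _))
            exact (mulVec_norm_le _ _).trans
              (mul_le_mul_of_nonneg_left (mulVec_norm_le _ _) hsn)
        _ = ‖e q‖ * (specNorm Dd * ‖e z‖) := by rw [hW]; ring
    rcases (norm_nonneg (e q)).lt_or_eq with h0 | h0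
    · have h2 : ‖e q‖ ^ 2 ≤ ‖e q‖ * (specNorm Dd * ‖e z‖) := by
        rw [norm_e_sq]; exact hqq
      nlinarith [h2, h0]
    · rw [← h0]; positivity
  have hdiff : T x₁ - T x₂ = (A x₁)⁻¹ *ᵥ ((A x₂ - A x₁) *ᵥ ((A x₂)⁻¹ *ᵥ u)) := by
    have hm1 : (A x₁)⁻¹ * (A x₂ - A x₁) * (A x₂)⁻¹ = (A x₁)⁻¹ - (A x₂)⁻¹ := by
      rw [Matrix.mul_sub, Matrix.nonsing_inv_mul _ (hdet x₁), Matrix.sub_mul, one_mul,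
        Matrix.mul_assoc, Matrix.mul_nonsing_inv _ (hdet x₂), Matrix.mul_one]
    rw [hTA, hTA, Matrix.mulVec_mulVec, Matrix.mulVec_mulVec, hm1, Matrix.sub_mulVec]
  set w₂ := (A x₂)⁻¹ *ᵥ u with hw₂
  set q := (A x₂ - A x₁) *ᵥ w₂ with hqdef
  have hqbound : ‖e q‖ ≤ lam * ((L * ‖e x₁ - e x₂‖) * (‖e u‖ / lamε)) := by
    have h1 : q = lam • ((Wᵀ * Dd * W) *ᵥ w₂) := by
      rw [hqdef, hA21, Matrix.smul_mulVec]
    have h2 : e q = lam • e ((Wᵀ * Dd * W) *ᵥ w₂) := by rw [h1]; simp [e]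
    rw [h2, norm_smul, Real.norm_eq_abs, abs_of_pos hlam]
    apply mul_le_mul_of_nonneg_left _ hlam.le
    calc ‖e ((Wᵀ * Dd * W) *ᵥ w₂)‖ ≤ specNorm Dd * ‖e w₂‖ := hmid w₂
      _ ≤ (L * ‖e x₁ - e x₂‖) * (‖e u‖ / lamε) := by
          apply mul_le_mul hDdnorm (hinv x₂ u) (norm_nonneg _)
          positivity
  calc ‖e (T x₁) - e (T x₂)‖ = ‖e ((A x₁)⁻¹ *ᵥ q)‖ := by rw [e_sub, hdiff]
    _ ≤ ‖e q‖ / lamε := hinv x₁ q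
    _ ≤ (lam * ((L * ‖e x₁ - e x₂‖) * (‖e u‖ / lamε))) / lamε := by
        exact (div_le_div_iff_of_pos_right hlamε_pos).mpr hqbound
    _ = (lam * L * ‖e u‖ / lamε ^ 2) * ‖e x₁ - e x₂‖ := by
        field_simp
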